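/- There exists a resolvable (6K_{20}, K_{1,3})-design: the edge multiset of 6K_{20} can be decomposed into 3-stars grouped into 76 parallel classes, each consisting of five vertex-disjoint 3-stars covering all 20 vertices. -/
import Mathlib


/-- The multiset of edges of a simple graph on `Fin m`. -/
noncomputable def edgeMultiset {m : ℕ} (H : SimpleGraph (Fin m)) : Multiset (Sym2 (Fin m)) :=
  (Set.toFinite H.edgeSet).toFinset.val

/-- The number of edges of a simple graph on `Fin m`. -/
noncomputable def edgeCount {m : ℕ} (H : SimpleGraph (Fin m)) : ℕ := (edgeMultiset H).card

/-- The multiset of edges of the copy of `G` given by the embedding `f`. -/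
noncomputable def blockEdges {n v : ℕ} (G : SimpleGraph (Fin n)) (f : Fin n ↪ Fin v) :
    Multiset (Sym2 (Fin v)) :=
  (edgeMultiset G).map (Sym2.map ⇑f)

/-- `classes` is a resolvable decomposition of the multigraph `lam • H` into copies
of `G`: each parallel class covers every vertex exactly once, and the edges of all
blocks, counted with multiplicity, are exactly the edges of `H` taken `lam` times. -/
def IsResolvableDecomp {n v : ℕ} (lam : ℕ) (G : SimpleGraph (Fin n))
    (H : SimpleGraph (Fin v))
    (classes : Multiset (Multiset (Fin n ↪ Fin v))) : Prop :=
  (∀ P ∈ classes, P.bind (fun f => Multiset.map ⇑f Finset.univ.val) =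
      (Finset.univ : Finset (Fin v)).val) ∧
  (classes.bind id).bind (fun f => blockEdges G f) = lam • edgeMultiset H

/-- A resolvable `(λ K_v, G)`-design. -/
def IsResolvableDesign {n : ℕ} (lam v : ℕ) (G : SimpleGraph (Fin n))
    (classes : Multiset (Multiset (Fin n ↪ Fin v))) : Prop :=
  IsResolvableDecomp lam G (⊤ : SimpleGraph (Fin v)) classes

/-- The 4-cycle `C₄`. -/
def cycle4 : SimpleGraph (Fin 4) :=
  SimpleGraph.fromRel (fun a b => (a.val, b.val) ∈ [(0,1),(1,2),(2,3),(3,0)])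

/-- The kite `K₃ + e` (triangle `0,1,2` with pendant edge `{2,3}`). -/
def kite : SimpleGraph (Fin 4) :=
  SimpleGraph.fromRel (fun a b => (a.val, b.val) ∈ [(0,1),(0,2),(1,2),(2,3)])

/-- The 3-star `K_{1,3}` with center `0`. -/
def star3 : SimpleGraph (Fin 4) :=
  SimpleGraph.fromRel (fun a b => (a.val, b.val) ∈ [(0,1),(0,2),(0,3)])

/-- The graph `K₄ - e` (missing the edge `{2,3}`). -/
def k4e : SimpleGraph (Fin 4) :=
  SimpleGraph.fromRel (fun a b => (a.val, b.val) ∈ [(0,1),(0,2),(1,2),(0,3),(1,3)])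


set_option maxRecDepth 100000
set_option maxHeartbeats 4000000

/-- Encode a `Sym2 (Fin 20)` as a natural number. -/
def enc : Sym2 (Fin 20) → ℕ :=
  Sym2.lift ⟨fun a b => if a.val ≤ b.val then 20 * a.val + b.val else 20 * b.val + a.val,
    by intro a b; dsimp only; split_ifs <;> omega⟩

lemma enc_inj : Function.Injective enc := by
  intro x y h
  induction x using Sym2.inductionOn with
  | hf a b =>
    induction y using Sym2.inductionOn with
    | hf c d =>
      simp only [enc, Sym2.lift_mk] at h
      rw [Sym2.eq_iff]
      simp only [Fin.ext_iff]
      have ha := a.isLt; have hb := b.isLt; have hc := c.isLt; have hd := d.isLt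
      split_ifs at h <;> omega

/-- The edges of `K₂₀`, explicitly. -/
def K20 : Multiset (Sym2 (Fin 20)) := {s(0,1),
  s(0,2),
  s(0,3),
  s(0,4),
  s(0,5),
  s(0,6),
  s(0,7),
  s(0,8),
  s(0,9),
  s(0,10),
  s(0,11),
  s(0,12),
  s(0,13),
  s(0,14),
  s(0,15),
  s(0,16),
  s(0,17),
  s(0,18),
  s(0,19),
  s(1,2),
  s(1,3),
  s(1,4),
  s(1,5),
  s(1,6),
  s(1,7),
  s(1,8),
  s(1,9),
  s(1,10),
  s(1,11),
  s(1,12),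
  s(1,13),
  s(1,14),
  s(1,15),
  s(1,16),
  s(1,17),
  s(1,18),
  s(1,19),
  s(2,3),
  s(2,4),
  s(2,5),
  s(2,6),
  s(2,7),
  s(2,8),
  s(2,9),
  s(2,10),
  s(2,11),
  s(2,12),
  s(2,13),
  s(2,14),
  s(2,15),
  s(2,16),
  s(2,17),
  s(2,18),
  s(2,19),
  s(3,4),
  s(3,5),
  s(3,6),
  s(3,7),
  s(3,8),
  s(3,9),
  s(3,10),
  s(3,11),
  s(3,12),
  s(3,13),
  s(3,14),
  s(3,15),
  s(3,16),
  s(3,17),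
  s(3,18),
  s(3,19),
  s(4,5),
  s(4,6),
  s(4,7),
  s(4,8),
  s(4,9),
  s(4,10),
  s(4,11),
  s(4,12),
  s(4,13),
  s(4,14),
  s(4,15),
  s(4,16),
  s(4,17),
  s(4,18),
  s(4,19),
  s(5,6),
  s(5,7),
  s(5,8),
  s(5,9),
  s(5,10),
  s(5,11),
  s(5,12),
  s(5,13),
  s(5,14),
  s(5,15),
  s(5,16),
  s(5,17),
  s(5,18),
  s(5,19),
  s(6,7),
  s(6,8),
  s(6,9),
  s(6,10),
  s(6,11),
  s(6,12),
  s(6,13),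
  s(6,14),
  s(6,15),
  s(6,16),
  s(6,17),
  s(6,18),
  s(6,19),
  s(7,8),
  s(7,9),
  s(7,10),
  s(7,11),
  s(7,12),
  s(7,13),
  s(7,14),
  s(7,15),
  s(7,16),
  s(7,17),
  s(7,18),
  s(7,19),
  s(8,9),
  s(8,10),
  s(8,11),
  s(8,12),
  s(8,13),
  s(8,14),
  s(8,15),
  s(8,16),
  s(8,17),
  s(8,18),
  s(8,19),
  s(9,10),
  s(9,11),
  s(9,12),
  s(9,13),
  s(9,14),
  s(9,15),
  s(9,16),
  s(9,17),
  s(9,18),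
  s(9,19),
  s(10,11),
  s(10,12),
  s(10,13),
  s(10,14),
  s(10,15),
  s(10,16),
  s(10,17),
  s(10,18),
  s(10,19),
  s(11,12),
  s(11,13),
  s(11,14),
  s(11,15),
  s(11,16),
  s(11,17),
  s(11,18),
  s(11,19),
  s(12,13),
  s(12,14),
  s(12,15),
  s(12,16),
  s(12,17),
  s(12,18),
  s(12,19),
  s(13,14),
  s(13,15),
  s(13,16),
  s(13,17),
  s(13,18),
  s(13,19),
  s(14,15),
  s(14,16),
  s(14,17),
  s(14,18),
  s(14,19),
  s(15,16),
  s(15,17),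
  s(15,18),
  s(15,19),
  s(16,17),
  s(16,18),
  s(16,19),
  s(17,18),
  s(17,19),
  s(18,19)}

lemma em_star3 : edgeMultiset star3 = {s(0,1), s(0,2), s(0,3)} := by
  rw [edgeMultiset]
  refine (Multiset.Nodup.ext ((Set.toFinite _).toFinset.nodup) (by decide)).mpr ?_
  intro x
  rw [Finset.mem_val, Set.Finite.mem_toFinset]
  induction x using Sym2.ind with
  | _ a b =>
    rw [SimpleGraph.mem_edgeSet]
    simp only [star3, SimpleGraph.fromRel_adj]
    revert a b; decide

lemma em_top : edgeMultiset (⊤ : SimpleGraph (Fin 20)) = K20 := by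
  rw [edgeMultiset]
  refine (Multiset.Nodup.ext ((Set.toFinite _).toFinset.nodup)
    (Multiset.Nodup.of_map enc (by decide))).mpr ?_
  intro x
  rw [Finset.mem_val, Set.Finite.mem_toFinset]
  induction x using Sym2.ind with
  | _ a b =>
    rw [SimpleGraph.mem_edgeSet, SimpleGraph.top_adj,
      ← Multiset.mem_map_of_injective enc_inj]
    revert a b; decide

/-- Make an embedding `Fin 4 ↪ Fin 20` from four distinct values. -/
def mkEmb (a b c d : Fin 20) (h : ([a,b,c,d] : List (Fin 20)).Nodup) : Fin 4 ↪ Fin 20 :=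
  ⟨![a,b,c,d], by
    rw [← List.nodup_ofFn]
    simpa [List.ofFn_succ] using h⟩

def myClasses : Multiset (Multiset (Fin 4 ↪ Fin 20)) := {
  {mkEmb 19 4 5 12 (by decide), mkEmb 0 3 9 11 (by decide), mkEmb 8 1 2 13 (by decide), mkEmb 10 7 14 18 (by decide), mkEmb 15 6 16 17 (by decide)},
  {mkEmb 19 5 6 13 (by decide), mkEmb 1 4 10 12 (by decide), mkEmb 9 2 3 14 (by decide), mkEmb 11 8 15 0 (by decide), mkEmb 16 7 17 18 (by decide)},
  {mkEmb 19 6 7 14 (by decide), mkEmb 2 5 11 13 (by decide), mkEmb 10 3 4 15 (by decide), mkEmb 12 9 16 1 (by decide), mkEmb 17 8 18 0 (by decide)},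
  {mkEmb 19 7 8 15 (by decide), mkEmb 3 6 12 14 (by decide), mkEmb 11 4 5 16 (by decide), mkEmb 13 10 17 2 (by decide), mkEmb 18 9 0 1 (by decide)},
  {mkEmb 19 8 9 16 (by decide), mkEmb 4 7 13 15 (by decide), mkEmb 12 5 6 17 (by decide), mkEmb 14 11 18 3 (by decide), mkEmb 0 10 1 2 (by decide)},
  {mkEmb 19 9 10 17 (by decide), mkEmb 5 8 14 16 (by decide), mkEmb 13 6 7 18 (by decide), mkEmb 15 12 0 4 (by decide), mkEmb 1 11 2 3 (by decide)},
  {mkEmb 19 10 11 18 (by decide), mkEmb 6 9 15 17 (by decide), mkEmb 14 7 8 0 (by decide), mkEmb 16 13 1 5 (by decide), mkEmb 2 12 3 4 (by decide)},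
  {mkEmb 19 11 12 0 (by decide), mkEmb 7 10 16 18 (by decide), mkEmb 15 8 9 1 (by decide), mkEmb 17 14 2 6 (by decide), mkEmb 3 13 4 5 (by decide)},
  {mkEmb 19 12 13 1 (by decide), mkEmb 8 11 17 0 (by decide), mkEmb 16 9 10 2 (by decide), mkEmb 18 15 3 7 (by decide), mkEmb 4 14 5 6 (by decide)},
  {mkEmb 19 13 14 2 (by decide), mkEmb 9 12 18 1 (by decide), mkEmb 17 10 11 3 (by decide), mkEmb 0 16 4 8 (by decide), mkEmb 5 15 6 7 (by decide)},
  {mkEmb 19 14 15 3 (by decide), mkEmb 10 13 0 2 (by decide), mkEmb 18 11 12 4 (by decide), mkEmb 1 17 5 9 (by decide), mkEmb 6 16 7 8 (by decide)},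
  {mkEmb 19 15 16 4 (by decide), mkEmb 11 14 1 3 (by decide), mkEmb 0 12 13 5 (by decide), mkEmb 2 18 6 10 (by decide), mkEmb 7 17 8 9 (by decide)},
  {mkEmb 19 16 17 5 (by decide), mkEmb 12 15 2 4 (by decide), mkEmb 1 13 14 6 (by decide), mkEmb 3 0 7 11 (by decide), mkEmb 8 18 9 10 (by decide)},
  {mkEmb 19 17 18 6 (by decide), mkEmb 13 16 3 5 (by decide), mkEmb 2 14 15 7 (by decide), mkEmb 4 1 8 12 (by decide), mkEmb 9 0 10 11 (by decide)},
  {mkEmb 19 18 0 7 (by decide), mkEmb 14 17 4 6 (by decide), mkEmb 3 15 16 8 (by decide), mkEmb 5 2 9 13 (by decide), mkEmb 10 1 11 12 (by decide)},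
  {mkEmb 19 0 1 8 (by decide), mkEmb 15 18 5 7 (by decide), mkEmb 4 16 17 9 (by decide), mkEmb 6 3 10 14 (by decide), mkEmb 11 2 12 13 (by decide)},
  {mkEmb 19 1 2 9 (by decide), mkEmb 16 0 6 8 (by decide), mkEmb 5 17 18 10 (by decide), mkEmb 7 4 11 15 (by decide), mkEmb 12 3 13 14 (by decide)},
  {mkEmb 19 2 3 10 (by decide), mkEmb 17 1 7 9 (by decide), mkEmb 6 18 0 11 (by decide), mkEmb 8 5 12 16 (by decide), mkEmb 13 4 14 15 (by decide)},
  {mkEmb 19 3 4 11 (by decide), mkEmb 18 2 8 10 (by decide), mkEmb 7 0 1 12 (by decide), mkEmb 9 6 13 17 (by decide), mkEmb 14 5 15 16 (by decide)},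
  {mkEmb 11 19 9 12 (by decide), mkEmb 0 3 4 5 (by decide), mkEmb 8 1 2 13 (by decide), mkEmb 10 7 14 18 (by decide), mkEmb 15 6 16 17 (by decide)},
  {mkEmb 12 19 10 13 (by decide), mkEmb 1 4 5 6 (by decide), mkEmb 9 2 3 14 (by decide), mkEmb 11 8 15 0 (by decide), mkEmb 16 7 17 18 (by decide)},
  {mkEmb 13 19 11 14 (by decide), mkEmb 2 5 6 7 (by decide), mkEmb 10 3 4 15 (by decide), mkEmb 12 9 16 1 (by decide), mkEmb 17 8 18 0 (by decide)},
  {mkEmb 14 19 12 15 (by decide), mkEmb 3 6 7 8 (by decide), mkEmb 11 4 5 16 (by decide), mkEmb 13 10 17 2 (by decide), mkEmb 18 9 0 1 (by decide)},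
  {mkEmb 15 19 13 16 (by decide), mkEmb 4 7 8 9 (by decide), mkEmb 12 5 6 17 (by decide), mkEmb 14 11 18 3 (by decide), mkEmb 0 10 1 2 (by decide)},
  {mkEmb 16 19 14 17 (by decide), mkEmb 5 8 9 10 (by decide), mkEmb 13 6 7 18 (by decide), mkEmb 15 12 0 4 (by decide), mkEmb 1 11 2 3 (by decide)},
  {mkEmb 17 19 15 18 (by decide), mkEmb 6 9 10 11 (by decide), mkEmb 14 7 8 0 (by decide), mkEmb 16 13 1 5 (by decide), mkEmb 2 12 3 4 (by decide)},
  {mkEmb 18 19 16 0 (by decide), mkEmb 7 10 11 12 (by decide), mkEmb 15 8 9 1 (by decide), mkEmb 17 14 2 6 (by decide), mkEmb 3 13 4 5 (by decide)},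
  {mkEmb 0 19 17 1 (by decide), mkEmb 8 11 12 13 (by decide), mkEmb 16 9 10 2 (by decide), mkEmb 18 15 3 7 (by decide), mkEmb 4 14 5 6 (by decide)},
  {mkEmb 1 19 18 2 (by decide), mkEmb 9 12 13 14 (by decide), mkEmb 17 10 11 3 (by decide), mkEmb 0 16 4 8 (by decide), mkEmb 5 15 6 7 (by decide)},
  {mkEmb 2 19 0 3 (by decide), mkEmb 10 13 14 15 (by decide), mkEmb 18 11 12 4 (by decide), mkEmb 1 17 5 9 (by decide), mkEmb 6 16 7 8 (by decide)},
  {mkEmb 3 19 1 4 (by decide), mkEmb 11 14 15 16 (by decide), mkEmb 0 12 13 5 (by decide), mkEmb 2 18 6 10 (by decide), mkEmb 7 17 8 9 (by decide)},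
  {mkEmb 4 19 2 5 (by decide), mkEmb 12 15 16 17 (by decide), mkEmb 1 13 14 6 (by decide), mkEmb 3 0 7 11 (by decide), mkEmb 8 18 9 10 (by decide)},
  {mkEmb 5 19 3 6 (by decide), mkEmb 13 16 17 18 (by decide), mkEmb 2 14 15 7 (by decide), mkEmb 4 1 8 12 (by decide), mkEmb 9 0 10 11 (by decide)},
  {mkEmb 6 19 4 7 (by decide), mkEmb 14 17 18 0 (by decide), mkEmb 3 15 16 8 (by decide), mkEmb 5 2 9 13 (by decide), mkEmb 10 1 11 12 (by decide)},
  {mkEmb 7 19 5 8 (by decide), mkEmb 15 18 0 1 (by decide), mkEmb 4 16 17 9 (by decide), mkEmb 6 3 10 14 (by decide), mkEmb 11 2 12 13 (by decide)},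
  {mkEmb 8 19 6 9 (by decide), mkEmb 16 0 1 2 (by decide), mkEmb 5 17 18 10 (by decide), mkEmb 7 4 11 15 (by decide), mkEmb 12 3 13 14 (by decide)},
  {mkEmb 9 19 7 10 (by decide), mkEmb 17 1 2 3 (by decide), mkEmb 6 18 0 11 (by decide), mkEmb 8 5 12 16 (by decide), mkEmb 13 4 14 15 (by decide)},
  {mkEmb 10 19 8 11 (by decide), mkEmb 18 2 3 4 (by decide), mkEmb 7 0 1 12 (by decide), mkEmb 9 6 13 17 (by decide), mkEmb 14 5 15 16 (by decide)},
  {mkEmb 5 19 3 11 (by decide), mkEmb 0 4 9 12 (by decide), mkEmb 8 1 2 13 (by decide), mkEmb 10 7 14 18 (by decide), mkEmb 15 6 16 17 (by decide)},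
  {mkEmb 6 19 4 12 (by decide), mkEmb 1 5 10 13 (by decide), mkEmb 9 2 3 14 (by decide), mkEmb 11 8 15 0 (by decide), mkEmb 16 7 17 18 (by decide)},
  {mkEmb 7 19 5 13 (by decide), mkEmb 2 6 11 14 (by decide), mkEmb 10 3 4 15 (by decide), mkEmb 12 9 16 1 (by decide), mkEmb 17 8 18 0 (by decide)},
  {mkEmb 8 19 6 14 (by decide), mkEmb 3 7 12 15 (by decide), mkEmb 11 4 5 16 (by decide), mkEmb 13 10 17 2 (by decide), mkEmb 18 9 0 1 (by decide)},
  {mkEmb 9 19 7 15 (by decide), mkEmb 4 8 13 16 (by decide), mkEmb 12 5 6 17 (by decide), mkEmb 14 11 18 3 (by decide), mkEmb 0 10 1 2 (by decide)},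
  {mkEmb 10 19 8 16 (by decide), mkEmb 5 9 14 17 (by decide), mkEmb 13 6 7 18 (by decide), mkEmb 15 12 0 4 (by decide), mkEmb 1 11 2 3 (by decide)},
  {mkEmb 11 19 9 17 (by decide), mkEmb 6 10 15 18 (by decide), mkEmb 14 7 8 0 (by decide), mkEmb 16 13 1 5 (by decide), mkEmb 2 12 3 4 (by decide)},
  {mkEmb 12 19 10 18 (by decide), mkEmb 7 11 16 0 (by decide), mkEmb 15 8 9 1 (by decide), mkEmb 17 14 2 6 (by decide), mkEmb 3 13 4 5 (by decide)},
  {mkEmb 13 19 11 0 (by decide), mkEmb 8 12 17 1 (by decide), mkEmb 16 9 10 2 (by decide), mkEmb 18 15 3 7 (by decide), mkEmb 4 14 5 6 (by decide)},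
  {mkEmb 14 19 12 1 (by decide), mkEmb 9 13 18 2 (by decide), mkEmb 17 10 11 3 (by decide), mkEmb 0 16 4 8 (by decide), mkEmb 5 15 6 7 (by decide)},
  {mkEmb 15 19 13 2 (by decide), mkEmb 10 14 0 3 (by decide), mkEmb 18 11 12 4 (by decide), mkEmb 1 17 5 9 (by decide), mkEmb 6 16 7 8 (by decide)},
  {mkEmb 16 19 14 3 (by decide), mkEmb 11 15 1 4 (by decide), mkEmb 0 12 13 5 (by decide), mkEmb 2 18 6 10 (by decide), mkEmb 7 17 8 9 (by decide)},
  {mkEmb 17 19 15 4 (by decide), mkEmb 12 16 2 5 (by decide), mkEmb 1 13 14 6 (by decide), mkEmb 3 0 7 11 (by decide), mkEmb 8 18 9 10 (by decide)},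
  {mkEmb 18 19 16 5 (by decide), mkEmb 13 17 3 6 (by decide), mkEmb 2 14 15 7 (by decide), mkEmb 4 1 8 12 (by decide), mkEmb 9 0 10 11 (by decide)},
  {mkEmb 0 19 17 6 (by decide), mkEmb 14 18 4 7 (by decide), mkEmb 3 15 16 8 (by decide), mkEmb 5 2 9 13 (by decide), mkEmb 10 1 11 12 (by decide)},
  {mkEmb 1 19 18 7 (by decide), mkEmb 15 0 5 8 (by decide), mkEmb 4 16 17 9 (by decide), mkEmb 6 3 10 14 (by decide), mkEmb 11 2 12 13 (by decide)},
  {mkEmb 2 19 0 8 (by decide), mkEmb 16 1 6 9 (by decide), mkEmb 5 17 18 10 (by decide), mkEmb 7 4 11 15 (by decide), mkEmb 12 3 13 14 (by decide)},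
  {mkEmb 3 19 1 9 (by decide), mkEmb 17 2 7 10 (by decide), mkEmb 6 18 0 11 (by decide), mkEmb 8 5 12 16 (by decide), mkEmb 13 4 14 15 (by decide)},
  {mkEmb 4 19 2 10 (by decide), mkEmb 18 3 8 11 (by decide), mkEmb 7 0 1 12 (by decide), mkEmb 9 6 13 17 (by decide), mkEmb 14 5 15 16 (by decide)},
  {mkEmb 3 19 9 4 (by decide), mkEmb 0 5 12 11 (by decide), mkEmb 8 1 2 13 (by decide), mkEmb 10 7 14 18 (by decide), mkEmb 15 6 16 17 (by decide)},
  {mkEmb 4 19 10 5 (by decide), mkEmb 1 6 13 12 (by decide), mkEmb 9 2 3 14 (by decide), mkEmb 11 8 15 0 (by decide), mkEmb 16 7 17 18 (by decide)},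
  {mkEmb 5 19 11 6 (by decide), mkEmb 2 7 14 13 (by decide), mkEmb 10 3 4 15 (by decide), mkEmb 12 9 16 1 (by decide), mkEmb 17 8 18 0 (by decide)},
  {mkEmb 6 19 12 7 (by decide), mkEmb 3 8 15 14 (by decide), mkEmb 11 4 5 16 (by decide), mkEmb 13 10 17 2 (by decide), mkEmb 18 9 0 1 (by decide)},
  {mkEmb 7 19 13 8 (by decide), mkEmb 4 9 16 15 (by decide), mkEmb 12 5 6 17 (by decide), mkEmb 14 11 18 3 (by decide), mkEmb 0 10 1 2 (by decide)},
  {mkEmb 8 19 14 9 (by decide), mkEmb 5 10 17 16 (by decide), mkEmb 13 6 7 18 (by decide), mkEmb 15 12 0 4 (by decide), mkEmb 1 11 2 3 (by decide)},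
  {mkEmb 9 19 15 10 (by decide), mkEmb 6 11 18 17 (by decide), mkEmb 14 7 8 0 (by decide), mkEmb 16 13 1 5 (by decide), mkEmb 2 12 3 4 (by decide)},
  {mkEmb 10 19 16 11 (by decide), mkEmb 7 12 0 18 (by decide), mkEmb 15 8 9 1 (by decide), mkEmb 17 14 2 6 (by decide), mkEmb 3 13 4 5 (by decide)},
  {mkEmb 11 19 17 12 (by decide), mkEmb 8 13 1 0 (by decide), mkEmb 16 9 10 2 (by decide), mkEmb 18 15 3 7 (by decide), mkEmb 4 14 5 6 (by decide)},
  {mkEmb 12 19 18 13 (by decide), mkEmb 9 14 2 1 (by decide), mkEmb 17 10 11 3 (by decide), mkEmb 0 16 4 8 (by decide), mkEmb 5 15 6 7 (by decide)},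
  {mkEmb 13 19 0 14 (by decide), mkEmb 10 15 3 2 (by decide), mkEmb 18 11 12 4 (by decide), mkEmb 1 17 5 9 (by decide), mkEmb 6 16 7 8 (by decide)},
  {mkEmb 14 19 1 15 (by decide), mkEmb 11 16 4 3 (by decide), mkEmb 0 12 13 5 (by decide), mkEmb 2 18 6 10 (by decide), mkEmb 7 17 8 9 (by decide)},
  {mkEmb 15 19 2 16 (by decide), mkEmb 12 17 5 4 (by decide), mkEmb 1 13 14 6 (by decide), mkEmb 3 0 7 11 (by decide), mkEmb 8 18 9 10 (by decide)},
  {mkEmb 16 19 3 17 (by decide), mkEmb 13 18 6 5 (by decide), mkEmb 2 14 15 7 (by decide), mkEmb 4 1 8 12 (by decide), mkEmb 9 0 10 11 (by decide)},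
  {mkEmb 17 19 4 18 (by decide), mkEmb 14 0 7 6 (by decide), mkEmb 3 15 16 8 (by decide), mkEmb 5 2 9 13 (by decide), mkEmb 10 1 11 12 (by decide)},
  {mkEmb 18 19 5 0 (by decide), mkEmb 15 1 8 7 (by decide), mkEmb 4 16 17 9 (by decide), mkEmb 6 3 10 14 (by decide), mkEmb 11 2 12 13 (by decide)},
  {mkEmb 0 19 6 1 (by decide), mkEmb 16 2 9 8 (by decide), mkEmb 5 17 18 10 (by decide), mkEmb 7 4 11 15 (by decide), mkEmb 12 3 13 14 (by decide)},
  {mkEmb 1 19 7 2 (by decide), mkEmb 17 3 10 9 (by decide), mkEmb 6 18 0 11 (by decide), mkEmb 8 5 12 16 (by decide), mkEmb 13 4 14 15 (by decide)},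
  {mkEmb 2 19 8 3 (by decide), mkEmb 18 4 11 10 (by decide), mkEmb 7 0 1 12 (by decide), mkEmb 9 6 13 17 (by decide), mkEmb 14 5 15 16 (by decide)}}

lemma blockEdges_star3 (f : Fin 4 ↪ Fin 20) :
    blockEdges star3 f = {Sym2.map ⇑f s(0,1), Sym2.map ⇑f s(0,2), Sym2.map ⇑f s(0,3)} := by
  rw [blockEdges, em_star3]; rfl

lemma six_smul (s : Multiset (Sym2 (Fin 20))) : 6 • s = s+s+s+s+s+s := by module

theorem stmt14 :
    ∃ classes : Multiset (Multiset (Fin 4 ↪ Fin 20)),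
      IsResolvableDesign 6 20 star3 classes ∧
      Multiset.card classes = 76 ∧
      ∀ P ∈ classes, Multiset.card P = 5 := by
  refine ⟨myClasses, ⟨by decide, ?_⟩, by decide, by decide⟩
  rw [em_top, six_smul]
  simp only [blockEdges_star3]
  apply Multiset.map_injective enc_inj
  decide
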